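/- arXiv:2512.23091 — 2 statements merged into one kernel-verified Lean document; each statement's English description precedes it below -/
import Mathlib

section
/- Let φ be a formal power series over ℚ with constant term 1 satisfying φ(X)^2 * (1 - 2X)^2 * (1 - 4X) = 1, and let ψ := (1/4) * φ', where φ' is the formal derivative of φ. Then ψ(X)^2 * (1 - 2X)^4 * (1 - 4X)^3 = (1 - 3X)^2; equivalently, ψ is the power series expansion of (1 - 3X)/((1 - 2X)^2 · √((1 - 4X)^3)). -/
open PowerSeries

theorem stmt_3 (φ : PowerSeries ℚ)
    (hconst : PowerSeries.constantCoeff (R := ℚ) φ = 1)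
    (hφ : φ ^ 2 * (1 - 2 * X) ^ 2 * (1 - 4 * X) = 1)
    (ψ : PowerSeries ℚ)
    (hψ : ψ = PowerSeries.C (R := ℚ) (1 / 4) * PowerSeries.derivative ℚ φ) :
    ψ ^ 2 * (1 - 2 * X) ^ 4 * (1 - 4 * X) ^ 3 = (1 - 3 * X) ^ 2 := by
  set D := PowerSeries.derivative ℚ φ with hDdef
  have h4 : (d⁄dX ℚ) (4 : ℚ⟦X⟧) = 0 := by
    rw [show (4 : ℚ⟦X⟧) = C (R := ℚ) 4 from (map_ofNat (C (R := ℚ)) 4).symm, derivative_C]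
  have h2 : (d⁄dX ℚ) (2 : ℚ⟦X⟧) = 0 := by
    rw [show (2 : ℚ⟦X⟧) = C (R := ℚ) 2 from (map_ofNat (C (R := ℚ)) 2).symm, derivative_C]
  have hkey := congrArg (PowerSeries.derivative ℚ) hφ
  simp only [Derivation.leibniz, Derivation.leibniz_pow, PowerSeries.derivative_X,
    map_sub, map_one, h2, h4, Derivation.map_one_eq_zero, smul_eq_mul, ← hDdef] at hkey
  have hC : (PowerSeries.C (R := ℚ) (1/4)) * 4 = 1 := by
    rw [show (4 : ℚ⟦X⟧) = C (R := ℚ) 4 from (map_ofNat (C (R := ℚ)) 4).symm, ← map_mul]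
    norm_num
  have hφ0 : φ ≠ 0 := fun h => by simp [h] at hconst
  have h2X : (1 - 2 * X : ℚ⟦X⟧) ≠ 0 := fun h => by
    have := congrArg (constantCoeff (R := ℚ)) h; simp at this
  have h4X : (1 - 4 * X : ℚ⟦X⟧) ≠ 0 := fun h => by
    have := congrArg (constantCoeff (R := ℚ)) h; simp at this
  have hne : (2 : ℚ⟦X⟧) * φ * (1 - 2*X)^2 * (1 - 4*X) ≠ 0 := by
    apply mul_ne_zero (mul_ne_zero (mul_ne_zero
      (fun h => by have := congrArg (constantCoeff (R := ℚ)) h;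
                   rw [map_ofNat, map_zero] at this; norm_num at this : (2:ℚ⟦X⟧) ≠ 0) hφ0)
      (pow_ne_zero _ h2X)) h4X
  have hD : D = 4 * φ^3 * (1 - 2*X) * (1 - 3*X) := by
    apply mul_left_cancel₀ hne
    linear_combination hkey - (8 * φ^2 * (1 - 2*X) * (1 - 3*X)) * hφ
  subst hψ
  linear_combination ((C (R := ℚ) (1/4))^2 * (D + 4*φ^3*(1-2*X)*(1-3*X)) * ((1-2*X)^4 * (1-4*X)^3)) * hD
    + (16 * (C (R := ℚ) (1/4))^2 * ((φ^2*(1-2*X)^2*(1-4*X))^2 + (φ^2*(1-2*X)^2*(1-4*X)) + 1)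
        * (1-3*X)^2) * hφ
    + ((4 * (C (R := ℚ) (1/4)) + 1) * (1-3*X)^2) * hC
end

section
/- Let S(k) denote the sum over all quadruples of nonnegative integers (x1, x2, x3, x4) with x1 + x2 + x3 + x4 = k of the product binom(x1+x2, x1) * binom(x2+x3, x2) * binom(x3+x4, x3) * binom(x4+x1, x4). Then for every nonnegative integer k, the integer (k+1) * S(k+1) is divisible by 4. -/
/-- `S k` is the sum over all quadruples of nonnegative integers
`(x₁, x₂, x₃, x₄)` with `x₁ + x₂ + x₃ + x₄ = k` of
`C(x₁+x₂, x₁) * C(x₂+x₃, x₂) * C(x₃+x₄, x₃) * C(x₄+x₁, x₄)`. -/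
def S (k : ℕ) : ℕ :=
  ∑ x ∈ Finset.Nat.antidiagonalTuple 4 k,
    Nat.choose (x 0 + x 1) (x 0) * Nat.choose (x 1 + x 2) (x 1) *
      Nat.choose (x 2 + x 3) (x 2) * Nat.choose (x 3 + x 0) (x 3)

namespace Stmt5Aux

def f (x : Fin 4 → ℕ) : ℕ :=
  Nat.choose (x 0 + x 1) (x 0) * Nat.choose (x 1 + x 2) (x 1) *
    Nat.choose (x 2 + x 3) (x 2) * Nat.choose (x 3 + x 0) (x 3)

def r (x : Fin 4 → ℕ) : Fin 4 → ℕ := ![x 1, x 2, x 3, x 0]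
def r2 (x : Fin 4 → ℕ) : Fin 4 → ℕ := ![x 2, x 3, x 0, x 1]
def r3 (x : Fin 4 → ℕ) : Fin 4 → ℕ := ![x 3, x 0, x 1, x 2]
def sw (x : Fin 4 → ℕ) : Fin 4 → ℕ := ![x 1, x 0, x 3, x 2]

def P (x : Fin 4 → ℕ) : Prop := x 0 < x 2 ∨ (x 0 = x 2 ∧ x 1 < x 3)

instance : DecidablePred P := fun x => by unfold P; infer_instance

@[simp] lemma r_0 (x : Fin 4 → ℕ) : r x 0 = x 1 := rfl
@[simp] lemma r_1 (x : Fin 4 → ℕ) : r x 1 = x 2 := rfl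
@[simp] lemma r_2 (x : Fin 4 → ℕ) : r x 2 = x 3 := rfl
@[simp] lemma r_3 (x : Fin 4 → ℕ) : r x 3 = x 0 := rfl
@[simp] lemma r2_0 (x : Fin 4 → ℕ) : r2 x 0 = x 2 := rfl
@[simp] lemma r2_1 (x : Fin 4 → ℕ) : r2 x 1 = x 3 := rfl
@[simp] lemma r2_2 (x : Fin 4 → ℕ) : r2 x 2 = x 0 := rfl
@[simp] lemma r2_3 (x : Fin 4 → ℕ) : r2 x 3 = x 1 := rfl
@[simp] lemma r3_0 (x : Fin 4 → ℕ) : r3 x 0 = x 3 := rfl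
@[simp] lemma r3_1 (x : Fin 4 → ℕ) : r3 x 1 = x 0 := rfl
@[simp] lemma r3_2 (x : Fin 4 → ℕ) : r3 x 2 = x 1 := rfl
@[simp] lemma r3_3 (x : Fin 4 → ℕ) : r3 x 3 = x 2 := rfl
@[simp] lemma sw_0 (x : Fin 4 → ℕ) : sw x 0 = x 1 := rfl
@[simp] lemma sw_1 (x : Fin 4 → ℕ) : sw x 1 = x 0 := rfl
@[simp] lemma sw_2 (x : Fin 4 → ℕ) : sw x 2 = x 3 := rfl
@[simp] lemma sw_3 (x : Fin 4 → ℕ) : sw x 3 = x 2 := rfl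

lemma mem4 {n : ℕ} {x : Fin 4 → ℕ} :
    x ∈ Finset.Nat.antidiagonalTuple 4 n ↔ x 0 + x 1 + x 2 + x 3 = n := by
  rw [Finset.Nat.mem_antidiagonalTuple, Fin.sum_univ_four]

lemma f_r (x : Fin 4 → ℕ) : f (r x) = f x := by
  show Nat.choose (x 1 + x 2) (x 1) * Nat.choose (x 2 + x 3) (x 2) *
    Nat.choose (x 3 + x 0) (x 3) * Nat.choose (x 0 + x 1) (x 0) = _
  unfold f; ring

lemma f_r3 (x : Fin 4 → ℕ) : f (r3 x) = f x := by
  show Nat.choose (x 3 + x 0) (x 3) * Nat.choose (x 0 + x 1) (x 0) *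
    Nat.choose (x 1 + x 2) (x 1) * Nat.choose (x 2 + x 3) (x 2) = _
  unfold f; ring

lemma f_r2 (x : Fin 4 → ℕ) : f (r2 x) = f x := by
  show Nat.choose (x 2 + x 3) (x 2) * Nat.choose (x 3 + x 0) (x 3) *
    Nat.choose (x 0 + x 1) (x 0) * Nat.choose (x 1 + x 2) (x 1) = _
  unfold f; ring

lemma r2_r2 (x : Fin 4 → ℕ) : r2 (r2 x) = x := by funext i; fin_cases i <;> rfl
lemma r3_r (x : Fin 4 → ℕ) : r3 (r x) = x := by funext i; fin_cases i <;> rfl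
lemma r_r3 (x : Fin 4 → ℕ) : r (r3 x) = x := by funext i; fin_cases i <;> rfl
lemma sw_sw (x : Fin 4 → ℕ) : sw (sw x) = x := by funext i; fin_cases i <;> rfl

def A2 (n : ℕ) : Finset (Fin 4 → ℕ) :=
  (Finset.Nat.antidiagonalTuple 4 n).filter (fun x => x 2 = x 0 ∧ x 3 = x 1)

lemma key_split (n : ℕ) : ∃ t, S n = 4 * t + ∑ x ∈ A2 n, f x := by
  classical
  set A := Finset.Nat.antidiagonalTuple 4 n with hA
  set Q : (Fin 4 → ℕ) → Prop := fun x => x 2 = x 0 ∧ x 3 = x 1 with hQ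
  set A' := A.filter (fun x => ¬ Q x) with hA'
  set B := A'.filter P with hB
  set C := A'.filter (fun x => ¬ P x) with hC
  have hSC : ∑ x ∈ C, f x = ∑ x ∈ B, f x := by
    refine Finset.sum_nbij' r2 r2 ?_ ?_ ?_ ?_ ?_
    · intro x hx
      simp only [hC, hB, hA', hA, Finset.mem_filter, mem4, hQ, P,
        r2_0, r2_1, r2_2, r2_3] at hx ⊢
      omega
    · intro x hx
      simp only [hC, hB, hA', hA, Finset.mem_filter, mem4, hQ, P,
        r2_0, r2_1, r2_2, r2_3] at hx ⊢
      omega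
    · intro x _; exact r2_r2 x
    · intro x _; exact r2_r2 x
    · intro x _; exact (f_r2 x).symm
  have hBeven : 2 ∣ ∑ x ∈ B, f x := by
    rw [← ZMod.natCast_eq_zero_iff, Nat.cast_sum]
    refine Finset.sum_involution
      (fun x _ => if P (r x) then r x else r3 x) ?_ ?_ ?_ ?_
    · intro x hx
      beta_reduce
      by_cases h : P (r x)
      · rw [if_pos h, f_r, CharTwo.add_self_eq_zero]
      · rw [if_neg h, f_r3, CharTwo.add_self_eq_zero]
    · intro x hx _
      beta_reduce
      simp only [hB, hA', hA, Finset.mem_filter, mem4, hQ] at hx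
      obtain ⟨⟨hsum, hq⟩, hp⟩ := hx
      by_cases h : P (r x)
      · rw [if_pos h]
        intro hrx
        have h1 : x 1 = x 0 := congrFun hrx 0
        have h2 : x 2 = x 1 := congrFun hrx 1
        have h3 : x 3 = x 2 := congrFun hrx 2
        exact hq ⟨by omega, by omega⟩
      · rw [if_neg h]
        intro hrx
        have h1 : x 3 = x 0 := congrFun hrx 0
        have h2 : x 0 = x 1 := congrFun hrx 1
        have h3 : x 1 = x 2 := congrFun hrx 2
        exact hq ⟨by omega, by omega⟩
    · intro x hx
      beta_reduce
      simp only [hB, hA', hA, Finset.mem_filter, mem4, hQ, P] at hx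
      by_cases h : P (r x)
      · rw [if_pos h]
        simp only [P, r_0, r_1, r_2, r_3] at h
        simp only [hB, hA', hA, Finset.mem_filter, mem4, hQ, P,
          r_0, r_1, r_2, r_3]
        omega
      · rw [if_neg h]
        simp only [P, r_0, r_1, r_2, r_3] at h
        simp only [hB, hA', hA, Finset.mem_filter, mem4, hQ, P,
          r3_0, r3_1, r3_2, r3_3]
        omega
    · intro x hx
      beta_reduce
      simp only [hB, hA', hA, Finset.mem_filter, mem4, hQ, P] at hx
      by_cases h : P (r x)
      · rw [if_pos h]
        have hnp : ¬ P (r (r x)) := by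
          simp only [P, r_0, r_1, r_2, r_3] at h ⊢
          omega
        rw [if_neg hnp]
        exact r3_r x
      · rw [if_neg h]
        have hyp : P (r (r3 x)) := by
          simp only [P, r_0, r_1, r_2, r_3, r3_0, r3_1, r3_2, r3_3] at h ⊢
          omega
        rw [if_pos hyp]
        exact r_r3 x
  obtain ⟨t, ht⟩ := hBeven
  refine ⟨t, ?_⟩
  have h1 : S n = ∑ x ∈ A, f x := rfl
  have h2 : ∑ x ∈ A.filter Q, f x + ∑ x ∈ A', f x = ∑ x ∈ A, f x :=
    Finset.sum_filter_add_sum_filter_not A Q f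
  have h3 : ∑ x ∈ B, f x + ∑ x ∈ C, f x = ∑ x ∈ A', f x :=
    Finset.sum_filter_add_sum_filter_not A' P f
  have hA2 : A2 n = A.filter Q := rfl
  rw [h1, ← h2, ← h3, hSC, ht, hA2]
  ring

end Stmt5Aux

namespace Stmt5Aux

lemma a2_odd {n : ℕ} (hn : ¬ 2 ∣ n) : A2 n = ∅ := by
  refine Finset.eq_empty_of_forall_notMem ?_
  intro x hx
  simp only [A2, Finset.mem_filter, mem4] at hx
  exact hn ⟨x 0 + x 1, by omega⟩

lemma a2_even {m : ℕ} (hm : ¬ 2 ∣ m) : 2 ∣ ∑ x ∈ A2 (2 * m), f x := by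
  classical
  rw [← ZMod.natCast_eq_zero_iff, Nat.cast_sum]
  refine Finset.sum_involution (fun x _ => sw x) ?_ ?_ ?_ ?_
  · intro x hx
    beta_reduce
    simp only [A2, Finset.mem_filter, mem4] at hx
    obtain ⟨hsum, h20, h31⟩ := hx
    have hf : f (sw x) = f x := by
      show Nat.choose (x 1 + x 0) (x 1) * Nat.choose (x 0 + x 3) (x 0) *
        Nat.choose (x 3 + x 2) (x 3) * Nat.choose (x 2 + x 1) (x 2) = f x
      unfold f
      rw [h20, h31]
      ring
    rw [hf, CharTwo.add_self_eq_zero]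
  · intro x hx _
    beta_reduce
    simp only [A2, Finset.mem_filter, mem4] at hx
    obtain ⟨hsum, h20, h31⟩ := hx
    intro hsw
    have h1 : x 1 = x 0 := congrFun hsw 0
    exact hm ⟨x 0, by omega⟩
  · intro x hx
    beta_reduce
    simp only [A2, Finset.mem_filter, mem4, sw_0, sw_1, sw_2, sw_3] at hx ⊢
    omega
  · intro x hx
    exact sw_sw x

end Stmt5Aux

theorem stmt_5 (k : ℕ) : 4 ∣ (k + 1) * S (k + 1) := by
  obtain ⟨t, ht⟩ := Stmt5Aux.key_split (k + 1)
  rw [ht, Nat.mul_add]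
  refine Nat.dvd_add ⟨(k + 1) * t, by ring⟩ ?_
  by_cases h2 : 2 ∣ k + 1
  · obtain ⟨m, hm⟩ := h2
    by_cases hm2 : 2 ∣ m
    · obtain ⟨j, hj⟩ := hm2
      exact Dvd.dvd.mul_right ⟨j, by omega⟩ _
    · obtain ⟨s, hs⟩ := Stmt5Aux.a2_even hm2
      rw [hm] at *
      rw [hs]
      exact ⟨m * s, by ring⟩
  · rw [Stmt5Aux.a2_odd h2]
    simp
end
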